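/- A transient nearest neighbour random walk on an infinite locally finite tree T converges almost surely to a random end: there is a ∂T-valued random variable Z_∞ such that for every starting vertex x, Prob_x[Z_n → Z_∞ in the end topology of T ∪ ∂T] = 1. -/

import Mathlib

open Filter MeasureTheory

variable {V : Type*}

/-- The ends of a rooted tree, realised as geodesic rays from the root. -/
def Ends (root : V) (par : V → V) : Type _ :=
  {ξ : ℕ → V // ξ 0 = root ∧ ∀ n, par (ξ (n + 1)) = ξ n ∧ ξ (n + 1) ≠ ξ n}

/-- Neighbourhood relation of the tree given by the predecessor map `par`. -/
def adjT (par : V → V) (x y : V) : Prop := x ≠ y ∧ (par x = y ∨ par y = x)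

section DetAux
variable (root : V) (par : V → V) (depth : V → ℕ)
variable (hdepth0 : depth root = 0)
    (hdepth : ∀ x, x ≠ root → depth (par x) + 1 = depth x)
    (hlocfin : ∀ x : V, {y | par y = x ∧ y ≠ x}.Finite)

include hdepth0 hdepth in
lemma stmt10_depth_eq_zero_iff {x : V} : depth x = 0 ↔ x = root := by
  constructor
  · intro h
    by_contra hx
    have := hdepth x hx
    omega
  · rintro rfl; exact hdepth0

include hdepth0 hdepth in
lemma stmt10_depth_iterate {x : V} {k : ℕ} (hk : k ≤ depth x) :
    depth (par^[k] x) = depth x - k := by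
  induction k with
  | zero => simp
  | succ k ih =>
    have hk' : k ≤ depth x := by omega
    have h1 := ih hk'
    have hne : par^[k] x ≠ root := by
      intro h
      rw [h, hdepth0] at h1
      omega
    have h2 := hdepth _ hne
    rw [Function.iterate_succ_apply']
    omega

include hdepth0 hdepth in
lemma stmt10_iterate_depth_eq_root (x : V) : par^[depth x] x = root := by
  have h := stmt10_depth_iterate root par depth hdepth0 hdepth (le_refl (depth x))
  simp only [Nat.sub_self] at h
  exact (stmt10_depth_eq_zero_iff root par depth hdepth0 hdepth).mp h

include hdepth0 hdepth hlocfin in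
lemma stmt10_ball_finite (m : ℕ) : {x : V | depth x ≤ m}.Finite := by
  induction m with
  | zero =>
    apply Set.Finite.subset (Set.finite_singleton root)
    intro x hx
    simp only [Set.mem_setOf_eq, Nat.le_zero] at hx
    exact (stmt10_depth_eq_zero_iff root par depth hdepth0 hdepth).mp hx
  | succ m ih =>
    apply Set.Finite.subset (ih.union (Set.Finite.biUnion ih (fun y _ => hlocfin y)))
    intro x hx
    simp only [Set.mem_setOf_eq] at hx
    rcases Nat.lt_or_ge (depth x) (m+1) with h | h
    · left; simpa using Nat.lt_succ_iff.mp h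
    · have hdx : depth x = m + 1 := by omega
      have hxr : x ≠ root := by
        intro h; rw [h, hdepth0] at hdx; omega
      have hp := hdepth x hxr
      right
      refine Set.mem_biUnion (show depth (par x) ≤ m by omega) ?_
      refine ⟨rfl, ?_⟩
      intro h
      rw [← h] at hp; omega

include hdepth0 hdepth hlocfin in
lemma stmt10_countable_V : Countable V := by
  have : (Set.univ : Set V).Countable := by
    have : (Set.univ : Set V) = ⋃ m : ℕ, {x : V | depth x ≤ m} := by
      ext x
      simp only [Set.mem_univ, Set.mem_iUnion, Set.mem_setOf_eq, true_iff]
      exact ⟨depth x, le_refl _⟩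
    rw [this]
    exact Set.countable_iUnion
      (fun m => (stmt10_ball_finite root par depth hdepth0 hdepth hlocfin m).countable)
  exact Set.countable_univ_iff.mp this

include hdepth0 hdepth in
lemma stmt10_ancestor_step {a b : V} {m : ℕ} (hadj : adjT par a b)
    (ha : m < depth a) (hb : m < depth b) :
    par^[depth a - m] a = par^[depth b - m] b := by
  obtain ⟨hne, h | h⟩ := hadj
  · have har : a ≠ root := by
      intro hr; rw [hr, hdepth0] at ha; omega
    have hd := hdepth a har
    rw [h] at hd
    have : depth a - m = (depth b - m) + 1 := by omega
    rw [this, Function.iterate_succ_apply, h]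
  · have hbr : b ≠ root := by
      intro hr; rw [hr, hdepth0] at hb; omega
    have hd := hdepth b hbr
    rw [h] at hd
    have : depth b - m = (depth a - m) + 1 := by omega
    rw [this, Function.iterate_succ_apply, h]

include hlocfin in
lemma stmt10_exists_end [Infinite V] (hiter : ∀ x : V, par^[depth x] x = root) :
    Nonempty (Ends root par) := by
  classical
  set D : V → Set V := fun x => {y | ∃ k, par^[k] y = x} with hD
  have hcover : ∀ (k : ℕ) (x y : V), par^[k] y = x →
      y = x ∨ ∃ c, par c = x ∧ c ≠ x ∧ y ∈ D c := by
    intro k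
    induction k with
    | zero => intro x y h; left; exact h
    | succ k ih =>
      intro x y h
      rw [Function.iterate_succ_apply'] at h
      by_cases hc : par^[k] y = x
      · exact ih x y hc
      · right
        exact ⟨par^[k] y, h, hc, ⟨k, rfl⟩⟩
  have hstep : ∀ x : V, (D x).Infinite →
      ∃ c, par c = x ∧ c ≠ x ∧ (D c).Infinite := by
    intro x hinf
    by_contra hcon
    push_neg at hcon
    have hsub : D x ⊆ {x} ∪ ⋃ c ∈ {y | par y = x ∧ y ≠ x}, D c := by
      rintro y ⟨k, hk⟩
      rcases hcover k x y hk with h | ⟨c, hc1, hc2, hc3⟩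
      · left; exact h
      · right; exact Set.mem_biUnion ⟨hc1, hc2⟩ hc3
    have hfin : ({x} ∪ ⋃ c ∈ {y | par y = x ∧ y ≠ x}, D c).Finite := by
      refine (Set.finite_singleton x).union (Set.Finite.biUnion (hlocfin x) ?_)
      rintro c ⟨hc1, hc2⟩
      exact hcon c hc1 hc2
    exact hinf (hfin.subset hsub)
  have hrootinf : (D root).Infinite := by
    have : D root = Set.univ := by
      ext y
      simp only [hD, Set.mem_setOf_eq, Set.mem_univ, iff_true]
      exact ⟨depth y, hiter y⟩
    rw [this]
    exact Set.infinite_univ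
  choose c hc1 hc2 hc3 using hstep
  let f : ℕ → {v : V // (D v).Infinite} := fun n =>
    Nat.rec ⟨root, hrootinf⟩ (fun _ q => ⟨c q.1 q.2, hc3 q.1 q.2⟩) n
  refine ⟨⟨fun n => (f n).1, rfl, fun n => ?_⟩⟩
  exact ⟨hc1 (f n).1 (f n).2, hc2 (f n).1 (f n).2⟩

lemma stmt10_converge_of_good
    (hdi : ∀ {x : V} {k : ℕ}, k ≤ depth x → depth (par^[k] x) = depth x - k)
    (hiter : ∀ x : V, par^[depth x] x = root)
    (hball : ∀ m : ℕ, {x : V | depth x ≤ m}.Finite)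
    (hstep : ∀ {a b : V} {m : ℕ}, adjT par a b → m < depth a → m < depth b →
      par^[depth a - m] a = par^[depth b - m] b)
    (z : ℕ → V)
    (hadj : ∀ n, adjT par (z n) (z (n + 1)))
    (hfin : ∀ y : V, {n | z n = y}.Finite) :
    ∃ ξ : Ends root par, ∀ m : ℕ, ∀ᶠ n in atTop, ∃ k : ℕ, par^[k] (z n) = ξ.1 m := by
  classical
  have hesc : ∀ m : ℕ, ∃ N, ∀ n ≥ N, m < depth (z n) := by
    intro m
    have hfin2 : {n | depth (z n) ≤ m}.Finite := by
      have : {n | depth (z n) ≤ m} ⊆ ⋃ y ∈ {x : V | depth x ≤ m}, {n | z n = y} := by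
        intro n hn
        exact Set.mem_biUnion hn rfl
      exact ((hball m).biUnion (fun y _ => hfin y)).subset this
    obtain ⟨N, hN⟩ := hfin2.bddAbove
    refine ⟨N + 1, fun n hn => ?_⟩
    by_contra h
    have : n ≤ N := hN (by simpa using Nat.le_of_not_lt h)
    omega
  choose N hN using hesc
  have key : ∀ m : ℕ, ∀ n ≥ N m,
      par^[depth (z n) - m] (z n) = par^[depth (z (N m)) - m] (z (N m)) := by
    intro m n hn
    induction n, hn using Nat.le_induction with
    | base => rfl
    | succ n hn ih =>
      rw [← ih]
      exact (hstep (hadj n) (hN m n hn) (hN m (n + 1) (by omega))).symm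
  set ξ : ℕ → V := fun m => par^[depth (z (N m)) - m] (z (N m)) with hξ
  have hdepthξ : ∀ m, depth (ξ m) = m := by
    intro m
    have h1 := hN m (N m) le_rfl
    rw [hξ]
    simp only []
    rw [hdi (by omega)]
    omega
  have hpar : ∀ m, par (ξ (m + 1)) = ξ m := by
    intro m
    set n := max (N m) (N (m + 1)) with hn
    have h1 : par^[depth (z n) - (m+1)] (z n) = ξ (m + 1) := key (m+1) n (le_max_right _ _)
    have h2 : par^[depth (z n) - m] (z n) = ξ m := key m n (le_max_left _ _)
    have hd : m + 1 < depth (z n) := hN (m+1) n (le_max_right _ _)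
    rw [← h1, ← h2]
    rw [← Function.iterate_succ_apply' par]
    congr 1
    omega
  refine ⟨⟨ξ, ?_, fun m => ⟨hpar m, ?_⟩⟩, ?_⟩
  · have h0 := hdepthξ 0
    have := hiter (ξ 0)
    rw [h0] at this
    simpa using this
  · intro h
    have := hdepthξ (m + 1)
    rw [h, hdepthξ m] at this
    omega
  · intro m
    rw [eventually_atTop]
    exact ⟨N m, fun n hn => ⟨depth (z n) - m, key m n hn⟩⟩

end DetAux

section ProbAux
variable [Countable V] {Ω : Type*} [MeasurableSpace Ω]
variable (root : V) (par : V → V) (p : V → V → ENNReal) (μ : Measure Ω) (Z : ℕ → Ω → V)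

include root in
lemma stmt10_pair_null
    (hM : ∀ (n : ℕ) (w : ℕ → V),
      μ {ω | ∀ k ≤ n + 1, Z k ω = w k} = μ {ω | ∀ k ≤ n, Z k ω = w k} * p (w n) (w (n + 1)))
    (n : ℕ) (u v : V) (hp : p u v = 0) :
    μ {ω | Z n ω = u ∧ Z (n + 1) ω = v} = 0 := by
  classical
  set ext : (Fin (n + 2) → V) → ℕ → V :=
    fun g k => if h : k < n + 2 then g ⟨k, h⟩ else root with hext
  set s : (Fin (n + 2) → V) → Set Ω :=
    fun g => {ω | ∀ k ≤ n + 1, Z k ω = ext g k} ∩ {ω | Z n ω = u ∧ Z (n + 1) ω = v} with hs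
  have hcover : {ω | Z n ω = u ∧ Z (n + 1) ω = v} ⊆ ⋃ g, s g := by
    intro ω hω
    refine Set.mem_iUnion.mpr ⟨fun k => Z k.1 ω, ⟨?_, hω⟩⟩
    intro k hk
    simp only [hext, dif_pos (show k < n + 2 by omega)]
  refine measure_mono_null hcover (measure_iUnion_null fun g => ?_)
  by_cases hg : ext g n = u ∧ ext g (n + 1) = v
  · refine measure_mono_null Set.inter_subset_left ?_
    rw [hM n (ext g), hg.1, hg.2, hp, mul_zero]
  · refine measure_mono_null (fun ω hω => ?_) (measure_empty)
    exfalso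
    obtain ⟨h1, h2, h3⟩ := hω
    exact hg ⟨by rw [← h1 n (by omega), h2], by rw [← h1 (n+1) (by omega), h3]⟩

include root in
lemma stmt10_adj_null
    (hnn : ∀ x y : V, 0 < p x y ↔ adjT par x y)
    (hM : ∀ (n : ℕ) (w : ℕ → V),
      μ {ω | ∀ k ≤ n + 1, Z k ω = w k} = μ {ω | ∀ k ≤ n, Z k ω = w k} * p (w n) (w (n + 1)))
    : μ {ω | ¬ ∀ n, adjT par (Z n ω) (Z (n + 1) ω)} = 0 := by
  have hcover : {ω | ¬ ∀ n, adjT par (Z n ω) (Z (n + 1) ω)} ⊆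
      ⋃ (q : ℕ × V × V),
        {ω | Z q.1 ω = q.2.1 ∧ Z (q.1 + 1) ω = q.2.2 ∧ ¬ adjT par q.2.1 q.2.2} := by
    intro ω hω
    push_neg at hω
    obtain ⟨n, hn⟩ := hω
    exact Set.mem_iUnion.mpr ⟨⟨n, Z n ω, Z (n + 1) ω⟩, rfl, rfl, hn⟩
  refine measure_mono_null hcover (measure_iUnion_null fun q => ?_)
  obtain ⟨n, u, v⟩ := q
  by_cases hadj : adjT par u v
  · have he : {ω : Ω | Z n ω = u ∧ Z (n + 1) ω = v ∧ ¬ adjT par u v} = ∅ := by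
      ext ω
      simp only [Set.mem_setOf_eq, Set.mem_empty_iff_false, iff_false]
      rintro ⟨-, -, h⟩
      exact h hadj
    rw [he]
    exact measure_empty
  · have hp : p u v = 0 := by
      by_contra h
      exact hadj ((hnn u v).mp (pos_iff_ne_zero.mpr h))
    refine measure_mono_null ?_ (stmt10_pair_null root p μ Z hM n u v hp)
    exact fun ω hω => ⟨hω.1, hω.2.1⟩

end ProbAux

/-- A transient nearest neighbour random walk on an infinite locally finite tree `T`
converges almost surely to a random end: there is a `∂T`-valued random variable `Z_∞`
such that for every starting vertex `x`,
`Prob_x[Z_n → Z_∞ in the end topology of T ∪ ∂T] = 1`.  Convergence of `Z_n` to the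
end represented by the ray `Z_∞` means that for every `m`, eventually the vertex
`(Z_∞) m` is an ancestor of `Z_n`. -/
theorem stmt_10 [Infinite V] (root : V) (par : V → V) (depth : V → ℕ)
    (hroot : par root = root) (hdepth0 : depth root = 0)
    (hdepth : ∀ x, x ≠ root → depth (par x) + 1 = depth x)
    (hlocfin : ∀ x : V, {y | par y = x ∧ y ≠ x}.Finite)
    (p : V → V → ENNReal)
    (hnn : ∀ x y : V, 0 < p x y ↔ adjT par x y)
    (hstoch : ∀ x : V, ∑' y, p x y = 1)
    {Ω : Type*} [MeasurableSpace Ω] (P : V → Measure Ω)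
    [∀ x, IsProbabilityMeasure (P x)]
    (Z : ℕ → Ω → V)
    (hstart : ∀ x : V, P x {ω | Z 0 ω = x} = 1)
    (hMarkov : ∀ (x : V) (n : ℕ) (w : ℕ → V),
      P x {ω | ∀ k ≤ n + 1, Z k ω = w k}
        = P x {ω | ∀ k ≤ n, Z k ω = w k} * p (w n) (w (n + 1)))
    (htrans : ∀ x y : V, ∀ᵐ ω ∂(P x), {n : ℕ | Z n ω = y}.Finite) :
    ∃ Zinf : Ω → Ends root par, ∀ x : V, ∀ᵐ ω ∂(P x),
      ∀ m : ℕ, ∀ᶠ n in atTop, ∃ k : ℕ, par^[k] (Z n ω) = (Zinf ω).1 m := by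
  classical
  haveI : Countable V := stmt10_countable_V root par depth hdepth0 hdepth hlocfin
  obtain ⟨e0⟩ := stmt10_exists_end root par depth hlocfin
    (stmt10_iterate_depth_eq_root root par depth hdepth0 hdepth)
  set Good : Ω → Prop := fun ω =>
    ∃ ξ : Ends root par, ∀ m : ℕ, ∀ᶠ n in atTop, ∃ k : ℕ, par^[k] (Z n ω) = ξ.1 m with hGoodDef
  refine ⟨fun ω => if h : Good ω then h.choose else e0, fun x => ?_⟩
  have hae : ∀ᵐ ω ∂(P x), Good ω := by
    rw [ae_iff]
    have hcov : {ω | ¬ Good ω} ⊆ {ω | ¬ ∀ n, adjT par (Z n ω) (Z (n + 1) ω)}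
        ∪ ⋃ y : V, {ω | ¬ ({n | Z n ω = y}).Finite} := by
      intro ω hω
      by_cases hadj : ∀ n, adjT par (Z n ω) (Z (n + 1) ω)
      · by_cases hfin : ∀ y : V, ({n | Z n ω = y}).Finite
        · exact absurd (stmt10_converge_of_good root par depth
            (fun {x k} hk => stmt10_depth_iterate root par depth hdepth0 hdepth hk)
            (stmt10_iterate_depth_eq_root root par depth hdepth0 hdepth)
            (stmt10_ball_finite root par depth hdepth0 hdepth hlocfin)
            (fun {a b m} h1 h2 h3 => stmt10_ancestor_step root par depth hdepth0 hdepth h1 h2 h3)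
            (fun n => Z n ω) hadj hfin) hω
        · push_neg at hfin
          obtain ⟨y, hy⟩ := hfin
          exact Or.inr (Set.mem_iUnion.mpr ⟨y, hy⟩)
      · exact Or.inl hadj
    refine measure_mono_null hcov (measure_union_null ?_ (measure_iUnion_null fun y => ?_))
    · exact stmt10_adj_null root par p (P x) Z hnn (hMarkov x)
    · have := htrans x y
      rw [ae_iff] at this
      exact this
  filter_upwards [hae] with ω hω
  intro m
  rw [dif_pos hω]
  exact hω.choose_spec m
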